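/- Under the stated hypotheses, the gradient of the Jacobian determinant function det JG: ℝ² → ℝ is nonzero at every point of the singular set S(G) = {(x,y) : det JG(x,y) = 0}; in particular the singular set is a regular level set. -/

import Mathlib

/-- The gradient (total derivative) of the Jacobian-determinant function
`detJG(x,y) = 4(a00a11(x-p00)(y-p11) - a01a10(y-p01)(x-p10))` is nonzero at every point of
the singular set `{(x,y) : detJG(x,y) = 0}`; the singular set is a regular level set. -/
theorem grad_detJG_ne_zero_on_singular_set
    (a00 a01 a10 a11 p00 p01 p10 p11 : ℝ)
    (h00 : a00 ≠ 0) (h01 : a01 ≠ 0) (h10 : a10 ≠ 0) (h11 : a11 ≠ 0)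
    (hdet : a00 * a11 - a01 * a10 ≠ 0) (hp0 : p00 ≠ p10) (hp1 : p01 ≠ p11) :
    ∀ p : ℝ × ℝ,
      (4 * (a00 * a11 * (p.1 - p00) * (p.2 - p11) - a01 * a10 * (p.2 - p01) * (p.1 - p10)) = 0) →
      fderiv ℝ (fun q : ℝ × ℝ =>
        4 * (a00 * a11 * (q.1 - p00) * (q.2 - p11) - a01 * a10 * (q.2 - p01) * (q.1 - p10))) p
        ≠ 0 := by
  intro p hf hzero
  have h1 : HasFDerivAt (fun q : ℝ × ℝ => q.1 - p00) (ContinuousLinearMap.fst ℝ ℝ ℝ) p :=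
    (hasFDerivAt_fst).sub_const _
  have h2 : HasFDerivAt (fun q : ℝ × ℝ => q.2 - p11) (ContinuousLinearMap.snd ℝ ℝ ℝ) p :=
    (hasFDerivAt_snd).sub_const _
  have h3 : HasFDerivAt (fun q : ℝ × ℝ => q.2 - p01) (ContinuousLinearMap.snd ℝ ℝ ℝ) p :=
    (hasFDerivAt_snd).sub_const _
  have h4 : HasFDerivAt (fun q : ℝ × ℝ => q.1 - p10) (ContinuousLinearMap.fst ℝ ℝ ℝ) p :=
    (hasFDerivAt_fst).sub_const _
  have hd := ((((h1.const_mul (a00*a11)).mul h2).sub ((h3.const_mul (a01*a10)).mul h4)).const_mul 4)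
  have hL := hd.fderiv
  rw [show (fun q : ℝ × ℝ => 4 * (a00 * a11 * (q.1 - p00) * (q.2 - p11) - a01 * a10 * (q.2 - p01) * (q.1 - p10))) = (fun q : ℝ × ℝ => 4 * ((a00 * a11 * (q.1 - p00)) * (q.2 - p11) - (a01 * a10 * (q.2 - p01)) * (q.1 - p10))) from by ring_nf] at hzero
  erw [hzero] at hL
  have e1 := congrArg (fun L : (ℝ × ℝ) →L[ℝ] ℝ => L (1, 0)) hL.symm
  have e2 := congrArg (fun L : (ℝ × ℝ) →L[ℝ] ℝ => L (0, 1)) hL.symm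
  simp at e1 e2
  have hB : a01 * a10 ≠ 0 := mul_ne_zero h01 h10
  have hA : a00 * a11 ≠ 0 := mul_ne_zero h00 h11
  have k1 : a01 * a10 * (p.1 - p10) * (p01 - p11) = 0 := by
    linear_combination hf / 4 - (p.2 - p11) * e2
  have hx : p.1 - p10 = 0 := by
    rcases mul_eq_zero.mp k1 with h | h
    · rcases mul_eq_zero.mp h with h' | h'
      · exact absurd h' hB
      · exact h'
    · exact absurd h (sub_ne_zero.mpr hp1)
  have hx2 : p.1 - p00 = 0 := by
    have : a00 * a11 * (p.1 - p00) = 0 := by linear_combination e2 + (a01*a10) * hx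
    exact (mul_eq_zero.mp this).resolve_left hA
  exact hp0 (by linarith)
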